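/- Let w_1, …, w_n be polynomials with real coefficients, each of which is a sum of squares, and let α = (α_1, …, α_n) be a multiindex with |α| = α_1 + … + α_n = s ≥ 1. Then the polynomial Σ_{i=1}^n w_i^s − w_1^{α_1}·w_2^{α_2}⋯w_n^{α_n} is a sum of squares. -/

import Mathlib

open MvPolynomial

/-- A polynomial is a sum of squares if it is a finite sum of squares of polynomials. -/
def IsSOS {σ : Type*} (p : MvPolynomial σ ℝ) : Prop :=
  ∃ (r : ℕ) (q : Fin r → MvPolynomial σ ℝ), p = ∑ i, q i ^ 2

namespace SOSAux

open Finset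

section helpers
variable {R : Type*} [CommRing R]

theorem mysq (a : R) : IsSumSq (a * a) := by
  simpa using IsSumSq.sq_add a 0 IsSumSq.zero

theorem mymul {a b : R} (ha : IsSumSq a) (hb : IsSumSq b) : IsSumSq (a * b) := by
  induction ha with
  | zero => simpa using IsSumSq.zero
  | @sq_add x S hS ih =>
    rw [add_mul]
    refine IsSumSq.add ?_ ih
    clear ih hS
    induction hb with
    | zero => simpa using IsSumSq.zero
    | @sq_add y T hT ih2 =>
      have h : x * x * (y * y + T) = (x * y) * (x * y) + x * x * T := by ring
      rw [h]; exact IsSumSq.sq_add _ ih2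

theorem mypow {a : R} (ha : IsSumSq a) (n : ℕ) : IsSumSq (a ^ n) := by
  induction n with
  | zero => simpa using mysq (1 : R)
  | succ k ih => rw [pow_succ]; exact mymul ih ha

theorem mysum {ι : Type*} (s : Finset ι) (f : ι → R) (h : ∀ i ∈ s, IsSumSq (f i)) :
    IsSumSq (∑ i ∈ s, f i) :=
  Finset.sum_induction f IsSumSq (fun _ _ => IsSumSq.add) IsSumSq.zero h

theorem mynat (n : ℕ) {a : R} (ha : IsSumSq a) : IsSumSq ((n : R) * a) := by
  induction n with
  | zero => simpa using IsSumSq.zero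
  | succ k ih =>
    have h : ((k + 1 : ℕ) : R) * a = (k : R) * a + a := by push_cast; ring
    rw [h]; exact ih.add ha

/-- key one-sided lemma: (s)*a^(s+1) + b^(s+1) - (s+1)*(a^s*b) is SOS -/
theorem lemK {a b : R} (ha : IsSumSq a) (hb : IsSumSq b) (s : ℕ) :
    IsSumSq ((s : R) * a ^ (s + 1) + b ^ (s + 1) - ((s : ℕ) + 1 : ℕ) * (a ^ s * b)) := by
  induction s with
  | zero =>
    have h : ((0 : ℕ) : R) * a ^ (0 + 1) + b ^ (0 + 1) - ((0 + 1 : ℕ) : R) * (a ^ 0 * b) = 0 := by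
      push_cast; ring
    rw [h]; exact IsSumSq.zero
  | succ k ih =>
    set G : R := ∑ i ∈ Finset.range (k + 1), a ^ i * b ^ (k + 1 - 1 - i) with hG
    have hg : G * (a - b) = a ^ (k + 1) - b ^ (k + 1) := geom_sum₂_mul a b (k + 1)
    have hGsos : IsSumSq G := by
      refine mysum _ _ fun i _ => mymul (mypow ha i) (mypow hb _)
    have key : ((k + 1 : ℕ) : R) * a ^ (k + 1 + 1) + b ^ (k + 1 + 1)
        - ((k + 1 + 1 : ℕ) : R) * (a ^ (k + 1) * b)
        = a * ((k : R) * a ^ (k + 1) + b ^ (k + 1) - ((k + 1 : ℕ) : R) * (a ^ k * b))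
          + ((a - b) * (a - b)) * G := by
      push_cast
      linear_combination (b - a) * hg
    rw [key]
    exact (mymul ha ih).add (mymul (mysq _) hGsos)

end helpers

variable {σ : Type*}

theorem myCmul {c : ℝ} (hc : 0 ≤ c) {p : MvPolynomial σ ℝ} (hp : IsSumSq p) :
    IsSumSq (C c * p) := by
  have h : C c * p = (C (Real.sqrt c) * C (Real.sqrt c)) * p := by
    rw [← C_mul, Real.mul_self_sqrt hc]
  rw [h]
  exact mymul (mysq _) hp

/-- cancel a positive nat coefficient -/
theorem mycancel (m : ℕ) (hm : 0 < m) {x y : MvPolynomial σ ℝ}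
    (h : (m : MvPolynomial σ ℝ) * x = y) (hy : IsSumSq y) : IsSumSq x := by
  have hm' : ((m : ℝ))⁻¹ * (m : ℝ) = 1 := by
    rw [inv_mul_cancel₀]; exact_mod_cast hm.ne'
  have hx : x = C ((m : ℝ))⁻¹ * y := by
    rw [← h, ← mul_assoc]
    have h2 : (m : MvPolynomial σ ℝ) = C ((m : ℕ) : ℝ) := by simp
    rw [h2, ← C_mul, hm', C_1, one_mul]
  rw [hx]
  exact myCmul (by positivity) hy

theorem lemT2 {a b : MvPolynomial σ ℝ} (ha : IsSumSq a) (hb : IsSumSq b) (q : ℕ) :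
    ∀ p : ℕ, IsSumSq ((p : MvPolynomial σ ℝ) * a ^ (p + q) + (q : MvPolynomial σ ℝ) * b ^ (p + q)
      - ((p + q : ℕ) : MvPolynomial σ ℝ) * (a ^ p * b ^ q)) := by
  induction q with
  | zero =>
    intro p
    have h : (p : MvPolynomial σ ℝ) * a ^ (p + 0) + ((0:ℕ) : MvPolynomial σ ℝ) * b ^ (p + 0)
        - ((p + 0 : ℕ) : MvPolynomial σ ℝ) * (a ^ p * b ^ 0) = 0 := by push_cast; ring
    rw [h]; exact IsSumSq.zero
  | succ k ih =>
    intro p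
    match p with
    | 0 =>
      have h : ((0:ℕ) : MvPolynomial σ ℝ) * a ^ (0 + (k+1)) + ((k+1:ℕ) : MvPolynomial σ ℝ) * b ^ (0 + (k+1))
          - ((0 + (k+1) : ℕ) : MvPolynomial σ ℝ) * (a ^ 0 * b ^ (k+1)) = 0 := by push_cast; ring
      rw [h]; exact IsSumSq.zero
    | 1 =>
      have hk := lemK hb ha (k + 1)
      have h : ((1:ℕ) : MvPolynomial σ ℝ) * a ^ (1 + (k+1)) + ((k+1:ℕ) : MvPolynomial σ ℝ) * b ^ (1 + (k+1))
          - ((1 + (k+1) : ℕ) : MvPolynomial σ ℝ) * (a ^ 1 * b ^ (k+1))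
          = ((k+1 : ℕ) : MvPolynomial σ ℝ) * b ^ (k+1+1) + a ^ (k+1+1)
            - ((k+1+1 : ℕ) : MvPolynomial σ ℝ) * (b ^ (k+1) * a) := by push_cast; ring
      rw [h]; exact hk
    | (p' + 2) =>
      have σ₁ := ih (p' + 1)
      have σ₂ := lemK ha hb (p' + k + 2)
      have σ₃ := lemK hb ha (p' + k + 2)
      refine mycancel (p' + k + 1) (by omega) (y :=
          ((p' + 1 : ℕ) : MvPolynomial σ ℝ) *
            (((p' + k + 2 : ℕ) : MvPolynomial σ ℝ) * a ^ (p' + k + 2 + 1) + b ^ (p' + k + 2 + 1)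
              - ((p' + k + 2 + 1 : ℕ) : MvPolynomial σ ℝ) * (a ^ (p' + k + 2) * b))
          + ((k : ℕ) : MvPolynomial σ ℝ) *
            (((p' + k + 2 : ℕ) : MvPolynomial σ ℝ) * b ^ (p' + k + 2 + 1) + a ^ (p' + k + 2 + 1)
              - ((p' + k + 2 + 1 : ℕ) : MvPolynomial σ ℝ) * (b ^ (p' + k + 2) * a))
          + ((p' + k + 3 : ℕ) : MvPolynomial σ ℝ) * (a * (b *
              (((p' + 1 : ℕ) : MvPolynomial σ ℝ) * a ^ (p' + 1 + k) + (k : MvPolynomial σ ℝ) * b ^ (p' + 1 + k)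
                - ((p' + 1 + k : ℕ) : MvPolynomial σ ℝ) * (a ^ (p' + 1) * b ^ k))))) ?_ ?_
      · push_cast; ring
      · exact ((mynat _ σ₂).add (mynat _ σ₃)).add (mynat _ (mymul ha (mymul hb σ₁)))

theorem lemS (n : ℕ) (w : Fin n → MvPolynomial σ ℝ) (hw : ∀ i, IsSumSq (w i)) :
    ∀ (m : ℕ) (α : Fin n → ℕ), (univ.filter fun k => α k ≠ 0).card ≤ m →
    IsSumSq ((∑ k, ((α k : ℕ) : MvPolynomial σ ℝ) * w k ^ (∑ j, α j))
      - ((∑ j, α j : ℕ) : MvPolynomial σ ℝ) * ∏ k, w k ^ α k) := by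
  intro m
  induction m with
  | zero =>
    intro α hcard
    have hz : ∀ k, α k = 0 := by
      intro k
      by_contra hk
      have hmem : k ∈ univ.filter fun k => α k ≠ 0 := by simp [hk]
      have := Finset.card_pos.2 ⟨k, hmem⟩
      omega
    have h : (∑ k, ((α k : ℕ) : MvPolynomial σ ℝ) * w k ^ (∑ j, α j))
        - ((∑ j, α j : ℕ) : MvPolynomial σ ℝ) * ∏ k, w k ^ α k = 0 := by simp [hz]
    rw [h]; exact IsSumSq.zero
  | succ m ih =>
    intro α hcard
    by_cases hz : ∀ k, α k = 0
    · have h : (∑ k, ((α k : ℕ) : MvPolynomial σ ℝ) * w k ^ (∑ j, α j))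
          - ((∑ j, α j : ℕ) : MvPolynomial σ ℝ) * ∏ k, w k ^ α k = 0 := by simp [hz]
      rw [h]; exact IsSumSq.zero
    push_neg at hz
    obtain ⟨i, hi⟩ := hz
    set α' : Fin n → ℕ := Function.update α i 0 with hα'
    set q : ℕ := ∑ j, α' j with hqdef
    set e : Finset (Fin n) := univ.erase i with he
    have hqe : q = ∑ k ∈ e, α k := by
      rw [hqdef, ← Finset.add_sum_erase _ _ (mem_univ i)]
      simp only [hα', Function.update_self, zero_add, he]
      exact Finset.sum_congr rfl fun k hk => Function.update_of_ne (mem_erase.1 hk).1 _ _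
    have hs2 : ∑ j, α j = α i + q := by
      rw [hqe, he, Finset.add_sum_erase _ _ (mem_univ i)]
    rw [hs2]
    set E : ℕ := α i + q with hE
    set A : MvPolynomial σ ℝ := ∑ k ∈ e, ((α k : ℕ) : MvPolynomial σ ℝ) * w k ^ E with hA
    set B : MvPolynomial σ ℝ := ∑ k ∈ e, ((α k : ℕ) : MvPolynomial σ ℝ) * w k ^ q with hB
    set Q : MvPolynomial σ ℝ := ∏ k ∈ e, w k ^ α k with hQ
    have h1 : ∑ k, ((α k : ℕ) : MvPolynomial σ ℝ) * w k ^ E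
        = ((α i : ℕ) : MvPolynomial σ ℝ) * w i ^ E + A := by
      rw [hA, he, ← Finset.add_sum_erase _ _ (mem_univ i)]
    have h2 : ∏ k, w k ^ α k = w i ^ α i * Q := by
      rw [hQ, he, ← Finset.mul_prod_erase _ _ (mem_univ i)]
    have h3 : ∑ k, ((α' k : ℕ) : MvPolynomial σ ℝ) * w k ^ q = B := by
      rw [hB, he, ← Finset.add_sum_erase _ _ (mem_univ i)]
      simp only [hα', Function.update_self, Nat.cast_zero, zero_mul, zero_add]
      exact Finset.sum_congr rfl fun k hk => by
        rw [Function.update_of_ne (mem_erase.1 hk).1]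
    have h4 : ∏ k, w k ^ α' k = Q := by
      rw [hQ, he, ← Finset.mul_prod_erase _ _ (mem_univ i)]
      simp only [hα', Function.update_self, pow_zero, one_mul]
      exact Finset.prod_congr rfl fun k hk => by
        rw [Function.update_of_ne (mem_erase.1 hk).1]
    rcases Nat.eq_zero_or_pos q with hq0 | hqpos
    · have hz' : ∀ k ∈ e, α k = 0 := by
        intro k hk
        have hzz := hqe.symm
        rw [hq0] at hzz
        exact (Finset.sum_eq_zero_iff.1 hzz) k hk
      have hA0 : A = 0 := by
        rw [hA]; exact Finset.sum_eq_zero fun k hk => by rw [hz' k hk]; simp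
      have hQ1 : Q = 1 := by
        rw [hQ]; exact Finset.prod_eq_one fun k hk => by rw [hz' k hk]; simp
      have h : (∑ k, ((α k : ℕ) : MvPolynomial σ ℝ) * w k ^ E)
          - ((E : ℕ) : MvPolynomial σ ℝ) * ∏ k, w k ^ α k = 0 := by
        rw [h1, h2, hA0, hQ1, hE, hq0]
        push_cast; ring
      rw [h]; exact IsSumSq.zero
    · have hcard' : (univ.filter fun k => α' k ≠ 0).card ≤ m := by
        have hsub : (univ.filter fun k => α' k ≠ 0) ⊆ (univ.filter fun k => α k ≠ 0).erase i := by
          intro k hk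
          simp only [mem_filter, mem_univ, true_and] at hk
          have hki : k ≠ i := by
            intro hki; rw [hki, hα', Function.update_self] at hk; exact hk rfl
          rw [hα', Function.update_of_ne hki] at hk
          simp [Finset.mem_erase, hki, hk]
        have hmem : i ∈ univ.filter fun k => α k ≠ 0 := by simp [hi]
        have := Finset.card_le_card hsub
        rw [Finset.card_erase_of_mem hmem] at this
        omega
      have σ₁ := ih α' hcard'
      rw [← hqdef, h3, h4] at σ₁
      have a1 : ∑ k ∈ e, ((α k : ℕ) : MvPolynomial σ ℝ) = ((q : ℕ) : MvPolynomial σ ℝ) := by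
        rw [hqe]; exact (Nat.cast_sum _ _).symm
      set T2 : Fin n → MvPolynomial σ ℝ := fun k =>
        ((α i : ℕ) : MvPolynomial σ ℝ) * w i ^ E + ((q : ℕ) : MvPolynomial σ ℝ) * w k ^ E
          - ((E : ℕ) : MvPolynomial σ ℝ) * (w i ^ α i * w k ^ q) with hT2
      have hT2sos : ∀ k, IsSumSq (T2 k) := fun k => by
        rw [hT2, hE]; exact lemT2 (hw i) (hw k) q (α i)
      have h5 : ∑ k ∈ e, ((α k : ℕ) : MvPolynomial σ ℝ) * T2 k
          = ((q : ℕ) : MvPolynomial σ ℝ) * (((α i : ℕ) : MvPolynomial σ ℝ) * w i ^ E)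
            + ((q : ℕ) : MvPolynomial σ ℝ) * A
            - ((E : ℕ) : MvPolynomial σ ℝ) * (w i ^ α i * B) := by
        calc ∑ k ∈ e, ((α k : ℕ) : MvPolynomial σ ℝ) * T2 k
            = ∑ k ∈ e, ((((α i : ℕ) : MvPolynomial σ ℝ) * w i ^ E) * ((α k : ℕ) : MvPolynomial σ ℝ)
              + ((q : ℕ) : MvPolynomial σ ℝ) * (((α k : ℕ) : MvPolynomial σ ℝ) * w k ^ E)
              - (((E : ℕ) : MvPolynomial σ ℝ) * (w i ^ α i)) * (((α k : ℕ) : MvPolynomial σ ℝ) * w k ^ q)) :=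
              Finset.sum_congr rfl fun k _ => by rw [hT2]; ring
          _ = (((α i : ℕ) : MvPolynomial σ ℝ) * w i ^ E) * (∑ k ∈ e, ((α k : ℕ) : MvPolynomial σ ℝ))
              + ((q : ℕ) : MvPolynomial σ ℝ) * A
              - (((E : ℕ) : MvPolynomial σ ℝ) * (w i ^ α i)) * B := by
              rw [Finset.sum_sub_distrib, Finset.sum_add_distrib, ← Finset.mul_sum,
                ← Finset.mul_sum, ← Finset.mul_sum, hA, hB]
          _ = _ := by rw [a1]; ring
      refine mycancel q hqpos (y :=
        (∑ k ∈ e, ((α k : ℕ) : MvPolynomial σ ℝ) * T2 k)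
          + ((E : ℕ) : MvPolynomial σ ℝ) * (w i ^ α i * (B - ((q : ℕ) : MvPolynomial σ ℝ) * Q))) ?_ ?_
      · rw [h5, h1, h2]; ring
      · exact (mysum _ _ fun k _ => mynat _ (hT2sos k)).add
          (mynat _ (mymul (mypow (hw i) _) σ₁))

theorem sumsq_of_sos {p : MvPolynomial σ ℝ} (h : IsSOS p) : IsSumSq p := by
  obtain ⟨r, f, rfl⟩ := h
  refine mysum _ _ fun i _ => ?_
  rw [sq]; exact mysq _

theorem sos_of_sumsq {p : MvPolynomial σ ℝ} (h : IsSumSq p) : IsSOS p := by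
  induction h with
  | zero => exact ⟨0, fun i => 0, by simp⟩
  | @sq_add a S hS ih =>
    obtain ⟨r, f, rfl⟩ := ih
    refine ⟨r + 1, Fin.cons a f, ?_⟩
    rw [Fin.sum_univ_succ]
    simp [sq]

theorem final (n : ℕ) (w : Fin n → MvPolynomial σ ℝ)
    (hw : ∀ i, IsSumSq (w i)) (α : Fin n → ℕ) (s : ℕ) (hs : 1 ≤ s)
    (hα : ∑ i, α i = s) :
    IsSumSq ((∑ i, w i ^ s) - ∏ i, w i ^ α i) := by
  have main := lemS n w hw (univ.filter fun k => α k ≠ 0).card α le_rfl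
  rw [hα] at main
  have hle : ∀ k, α k ≤ s := fun k =>
    hα ▸ Finset.single_le_sum (f := α) (fun _ _ => Nat.zero_le _) (mem_univ k)
  have hcomb : ∑ k, (((s - α k : ℕ) : MvPolynomial σ ℝ) * w k ^ s
      + ((α k : ℕ) : MvPolynomial σ ℝ) * w k ^ s)
      = ((s : ℕ) : MvPolynomial σ ℝ) * ∑ k, w k ^ s := by
    rw [Finset.mul_sum]
    exact Finset.sum_congr rfl fun k _ => by
      rw [← add_mul, ← Nat.cast_add, Nat.sub_add_cancel (hle k)]
  refine mycancel s hs (y :=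
      (∑ k, ((s - α k : ℕ) : MvPolynomial σ ℝ) * w k ^ s)
        + ((∑ k, ((α k : ℕ) : MvPolynomial σ ℝ) * w k ^ s)
          - ((s : ℕ) : MvPolynomial σ ℝ) * ∏ k, w k ^ α k)) ?_ ?_
  · rw [mul_sub, ← hcomb, Finset.sum_add_distrib]; ring
  · exact (mysum _ _ fun k _ => mynat _ (mypow (hw k) s)).add main

end SOSAux

/-- If `w 1, …, w n` are sums of squares and `α` is a multiindex of total degree `s ≥ 1`,
then `∑ i, w i ^ s - w ^ α` is a sum of squares. -/
theorem stmt1 {σ : Type*} (n : ℕ) (w : Fin n → MvPolynomial σ ℝ)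
    (hw : ∀ i, IsSOS (w i)) (α : Fin n → ℕ) (s : ℕ) (hs : 1 ≤ s)
    (hα : ∑ i, α i = s) :
    IsSOS ((∑ i, w i ^ s) - ∏ i, w i ^ α i) :=
  SOSAux.sos_of_sumsq
    (SOSAux.final n w (fun i => SOSAux.sumsq_of_sos (hw i)) α s hs hα)
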